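/- Let $\mathbf{a}$ be an infinite word over a finite alphabet that is a fixed point of a prolongable morphism $\phi$, not eventually periodic, and suppose there exist a letter $a$ and a strictly increasing sequence $(n_k)$ with $|\phi^{n_k}(a)| = \max_j |\phi^{n_k}(j)|$ for all $k$, and suppose the letter $a$ occurs at least twice in $\mathbf{a}$, with prefix of the form $W_1 a W_2 a$. Then $\mathbf{a}$ satisfies Condition $(*)_w$ with $w = 1 + 1/(|W_2|+1)$, witnessed by $U_k = \phi^{n_k}(W_1)$ and $V_k = \phi^{n_k}(a W_2)$; in particular $|U_k|/|V_k| \le |W_1|$ for all $k$. -/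

import Mathlib

open scoped BigOperators

/-- `L` is a prefix of the infinite word `a` (0-indexed). -/
def IsPrefixSeq {A : Type*} (a : ℕ → A) (L : List A) : Prop :=
  ∀ i, i < L.length → L.getD i (a 0) = a i

/-- The word `V^w` for a real exponent `w`. -/
noncomputable def wPow {A : Type*} (V : List A) (w : ℝ) : List A :=
  (List.replicate ⌊w⌋₊ V).flatten ++ V.take ⌈(w - (⌊w⌋₊ : ℝ)) * (V.length : ℝ)⌉₊

/-- The sequence `a` is eventually periodic. -/
def EvPeriodic {A : Type*} (a : ℕ → A) : Prop :=
  ∃ r s : ℕ, 0 < s ∧ ∀ k, r ≤ k → a (k + s) = a k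

/-- Condition `(*)_w` of Adamczewski–Bugeaud. -/
noncomputable def ConditionStar {A : Type*} (a : ℕ → A) (w : ℝ) : Prop :=
  ¬ EvPeriodic a ∧
  ∃ U V : ℕ → List A,
    (∀ n, IsPrefixSeq a (U n ++ wPow (V n) w)) ∧
    (∃ C : ℝ, ∀ n, ((U n).length : ℝ) ≤ C * ((V n).length : ℝ)) ∧
    (∀ n, 0 < (V n).length) ∧
    StrictMono fun n => (V n).length

/-- The subword complexity function: number of distinct factors of length `n`. -/
noncomputable def complexity {A : Type*} (a : ℕ → A) (n : ℕ) : ℕ :=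
  Set.ncard {L : List A | ∃ i : ℕ, L = (List.range n).map fun j => a (i + j)}

/-- The action of a morphism (substitution) on finite words. -/
def mapWord {A B : Type*} (φ : A → List B) (L : List A) : List B := L.flatMap φ

/-- `φ` is prolongable on the letter `a0`. -/
def Prolongable {A : Type*} (φ : A → List A) (a0 : A) : Prop :=
  ∃ W : List A, W ≠ [] ∧ φ a0 = a0 :: W ∧ ∀ k : ℕ, (mapWord φ)^[k] W ≠ []

lemma isPrefixSeq_iff {A : Type*} (u : ℕ → A) (L : List A) :
    IsPrefixSeq u L ↔ L = (List.range L.length).map u := by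
  constructor
  · intro h
    apply List.ext_getElem (by simp)
    intro i h1 h2
    simp only [List.getElem_map, List.getElem_range]
    have := h i h1
    rwa [List.getD_eq_getElem _ _ h1] at this
  · intro h i hi
    rw [List.getD_eq_getElem _ _ hi]
    have := List.getElem_of_eq h hi
    simpa using this

lemma isPrefixSeq_mono {A : Type*} {u : ℕ → A} {L L' : List A}
    (hp : L' <+: L) (h : IsPrefixSeq u L) : IsPrefixSeq u L' := by
  obtain ⟨t, rfl⟩ := hp
  intro i hi
  have := h i (by simp; omega)
  rwa [List.getD_append _ _ _ _ hi] at this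

lemma mapWord_append {A B : Type*} (φ : A → List B) (X Y : List A) :
    mapWord φ (X ++ Y) = mapWord φ X ++ mapWord φ Y := by
  simp [mapWord]

lemma iter_append {A : Type*} (φ : A → List A) (m : ℕ) (X Y : List A) :
    (mapWord φ)^[m] (X ++ Y) = (mapWord φ)^[m] X ++ (mapWord φ)^[m] Y := by
  induction m generalizing X Y with
  | zero => simp
  | succ m ih => simp [Function.iterate_succ_apply, mapWord_append, ih]

lemma iter_nil {A : Type*} (φ : A → List A) (m : ℕ) :
    (mapWord φ)^[m] ([] : List A) = [] := by
  induction m with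
  | zero => rfl
  | succ m ih => rw [Function.iterate_succ_apply]; simpa [mapWord] using ih

lemma iter_len_le {A : Type*} (φ : A → List A) (m : ℕ) (M : ℕ)
    (h : ∀ j : A, ((mapWord φ)^[m] [j]).length ≤ M) :
    ∀ X : List A, ((mapWord φ)^[m] X).length ≤ X.length * M := by
  have hnil : (mapWord φ)^[m] ([] : List A) = [] := iter_nil φ m
  intro X
  induction X with
  | nil => simp [hnil]
  | cons c X ih =>
    have hc : (c :: X) = [c] ++ X := rfl
    rw [hc, iter_append, List.length_append]
    calc ((mapWord φ)^[m] [c]).length + ((mapWord φ)^[m] X).length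
        ≤ M + X.length * M := Nat.add_le_add (h c) ih
      _ = ([c] ++ X).length * M := by simp; ring

lemma iter_b0_len {A : Type*} (φ : A → List A) (b0 : A) (W : List A)
    (hW : φ b0 = b0 :: W) (hne : ∀ k : ℕ, (mapWord φ)^[k] W ≠ []) :
    ∀ m, m + 1 ≤ ((mapWord φ)^[m] [b0]).length := by
  intro m
  induction m with
  | zero => simp
  | succ m ih =>
    rw [Function.iterate_succ_apply]
    have h1 : mapWord φ [b0] = [b0] ++ W := by simp [mapWord, hW]
    rw [h1, iter_append]
    have h2 : 1 ≤ ((mapWord φ)^[m] W).length :=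
      List.length_pos_iff.mpr (hne m)
    simp only [List.length_append]
    omega

lemma wPow_eq {A : Type*} (V : List A) (L : ℕ) :
    wPow V (1 + 1/((L:ℝ)+1)) = V ++ V.take ⌈(V.length : ℝ)/((L:ℝ)+1)⌉₊ := by
  rcases Nat.eq_zero_or_pos L with hL | hL
  · subst hL
    have hw : (1 : ℝ) + 1/((0:ℕ):ℝ)+1 = 2 := by norm_num
    unfold wPow
    norm_num
    simp [List.replicate]
  · have hL1 : (1:ℝ) ≤ (L:ℝ) := by exact_mod_cast hL
    set w : ℝ := 1 + 1/((L:ℝ)+1) with hw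
    have hpos : (0:ℝ) < (L:ℝ)+1 := by linarith
    have h1 : (1:ℝ) ≤ w := by
      have : 0 < 1/((L:ℝ)+1) := by positivity
      rw [hw]; linarith
    have h2 : w < 2 := by
      have : 1/((L:ℝ)+1) < 1 := by
        rw [div_lt_one hpos]; linarith
      rw [hw]; linarith
    have hfl : ⌊w⌋₊ = 1 := by
      rw [Nat.floor_eq_iff (by linarith)]
      constructor
      · exact_mod_cast h1
      · push_cast; linarith
    unfold wPow
    rw [hfl]
    have hsub : w - ((1:ℕ):ℝ) = 1/((L:ℝ)+1) := by push_cast; rw [hw]; ring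
    rw [hsub, one_div_mul_eq_div]
    simp

theorem stmt_11 {A : Type*} [Fintype A] (φ : A → List A) (b0 : A)
    (hpro : Prolongable φ b0)
    (u : ℕ → A)
    (hfix : ∀ n : ℕ, IsPrefixSeq u (mapWord φ ((List.range n).map u)))
    (hnp : ¬ EvPeriodic u)
    (a : A) (nk : ℕ → ℕ) (hmono : StrictMono nk) (hpos : ∀ k, 0 < nk k)
    (hmax : ∀ k, ∀ j : A,
      ((mapWord φ)^[nk k] [j]).length ≤ ((mapWord φ)^[nk k] [a]).length)
    (W1 W2 : List A)
    (hpre : IsPrefixSeq u (W1 ++ [a] ++ W2 ++ [a])) :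
    ConditionStar u (1 + 1 / ((W2.length : ℝ) + 1)) ∧
    ∀ k, IsPrefixSeq u ((mapWord φ)^[nk k] W1 ++
          wPow ((mapWord φ)^[nk k] ([a] ++ W2)) (1 + 1 / ((W2.length : ℝ) + 1))) ∧
        (((mapWord φ)^[nk k] W1).length : ℝ) ≤
          (W1.length : ℝ) * (((mapWord φ)^[nk k] ([a] ++ W2)).length : ℝ) := by
  obtain ⟨W, hWne, hWeq, hWk⟩ := hpro
  have hstep : ∀ X : List A, IsPrefixSeq u X → IsPrefixSeq u (mapWord φ X) := by
    intro X hX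
    rw [isPrefixSeq_iff] at hX
    have h := hfix X.length
    rwa [← hX] at h
  have hiter : ∀ m (X : List A), IsPrefixSeq u X → IsPrefixSeq u ((mapWord φ)^[m] X) := by
    intro m
    induction m with
    | zero => intro X h; exact h
    | succ m ih =>
      intro X h
      rw [Function.iterate_succ_apply]
      exact ih _ (hstep _ h)
  have main : ∀ k, IsPrefixSeq u ((mapWord φ)^[nk k] W1 ++
          wPow ((mapWord φ)^[nk k] ([a] ++ W2)) (1 + 1 / ((W2.length : ℝ) + 1))) ∧
        (((mapWord φ)^[nk k] W1).length : ℝ) ≤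
          (W1.length : ℝ) * (((mapWord φ)^[nk k] ([a] ++ W2)).length : ℝ) := by
    intro k
    have hVP : (mapWord φ)^[nk k] ([a] ++ W2)
        = (mapWord φ)^[nk k] [a] ++ (mapWord φ)^[nk k] W2 := iter_append φ (nk k) [a] W2
    have hPle : ((mapWord φ)^[nk k] [a]).length ≤ ((mapWord φ)^[nk k] ([a] ++ W2)).length := by
      rw [hVP]; simp
    have hW2 : ((mapWord φ)^[nk k] W2).length
        ≤ W2.length * ((mapWord φ)^[nk k] [a]).length :=
      iter_len_le φ (nk k) _ (hmax k) W2
    have hVle : ((mapWord φ)^[nk k] ([a] ++ W2)).length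
        ≤ (W2.length + 1) * ((mapWord φ)^[nk k] [a]).length := by
      rw [hVP, List.length_append]
      have : ((mapWord φ)^[nk k] [a]).length + W2.length * ((mapWord φ)^[nk k] [a]).length
          = (W2.length + 1) * ((mapWord φ)^[nk k] [a]).length := by ring
      omega
    set ℓ : ℕ := ⌈(((mapWord φ)^[nk k] ([a] ++ W2)).length : ℝ)/((W2.length:ℝ)+1)⌉₊ with hℓ
    have hceil : ℓ ≤ ((mapWord φ)^[nk k] [a]).length := by
      rw [hℓ]
      apply Nat.ceil_le.mpr
      rw [div_le_iff₀ (by positivity)]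
      exact_mod_cast Nat.le_trans hVle (by rw [Nat.mul_comm])
    have hbig : IsPrefixSeq u ((mapWord φ)^[nk k] W1 ++
        ((mapWord φ)^[nk k] ([a] ++ W2) ++ (mapWord φ)^[nk k] [a])) := by
      have h0 : IsPrefixSeq u ((mapWord φ)^[nk k] (W1 ++ (([a] ++ W2) ++ [a]))) := by
        apply hiter
        have he : W1 ++ (([a] ++ W2) ++ [a]) = W1 ++ [a] ++ W2 ++ [a] := by
          simp [List.append_assoc]
        rwa [he]
      rwa [iter_append, iter_append] at h0
    constructor
    · rw [wPow_eq]
      have htake : ((mapWord φ)^[nk k] ([a] ++ W2)).take ℓ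
          = ((mapWord φ)^[nk k] [a]).take ℓ := by
        conv_lhs => rw [hVP]
        exact List.take_append_of_le_length hceil
      rw [htake]
      apply isPrefixSeq_mono _ hbig
      apply (List.prefix_append_right_inj _).mpr
      apply (List.prefix_append_right_inj _).mpr
      exact List.take_prefix _ _
    · have hUle : ((mapWord φ)^[nk k] W1).length
          ≤ W1.length * ((mapWord φ)^[nk k] [a]).length :=
        iter_len_le φ (nk k) _ (hmax k) W1
      have h2 : ((mapWord φ)^[nk k] W1).length
          ≤ W1.length * ((mapWord φ)^[nk k] ([a] ++ W2)).length :=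
        le_trans hUle (Nat.mul_le_mul_left _ hPle)
      exact_mod_cast h2
  refine ⟨⟨hnp, ?_⟩, main⟩
  have hlen : ∀ k, k < ((mapWord φ)^[nk k] ([a] ++ W2)).length := by
    intro k
    have h1 := iter_b0_len φ b0 W hWeq hWk (nk k)
    have h2 := hmax k b0
    have h3 : ((mapWord φ)^[nk k] [a]).length ≤ ((mapWord φ)^[nk k] ([a] ++ W2)).length := by
      rw [iter_append φ (nk k) [a] W2]; simp
    have h4 : k ≤ nk k := hmono.le_apply
    omega
  set lenV : ℕ → ℕ := fun k => ((mapWord φ)^[nk k] ([a] ++ W2)).length with hlenV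
  set g : ℕ → ℕ := fun n => lenV^[n] 0 with hg
  refine ⟨fun n => (mapWord φ)^[nk (g n)] W1, fun n => (mapWord φ)^[nk (g n)] ([a] ++ W2),
    fun n => (main (g n)).1, ⟨(W1.length : ℝ), fun n => (main (g n)).2⟩, ?_, ?_⟩
  · intro n
    exact Nat.zero_lt_of_lt (hlen (g n))
  · apply strictMono_nat_of_lt_succ
    intro n
    have hgs : g (n + 1) = lenV (g n) := Function.iterate_succ_apply' lenV n 0
    have := hlen (g (n + 1))
    calc lenV (g n) = g (n + 1) := hgs.symm
      _ < lenV (g (n + 1)) := hlen (g (n + 1))
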